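/- Let (l^i, r^i), i = 1, 2, satisfy the standing assumptions (continuity in t, strict monotonicity and bi-Lipschitz continuity in x, uniformly separated, i.e. inf(r^i − l^i) > 0), with r^1 ≥ r^2 and l^1 ≤ l^2 pointwise. For a fixed continuous input s, let (x^i, K^i) solve the Skorokhod problem SP_{l^i}^{r^i}(s) with K^i = K^{i,r} − K^{i,l}. Then K^{2,r}_t ≥ K^{1,r}_t and K^{2,l}_t ≥ K^{1,l}_t for every t ≥ 0. -/

import Mathlib

open Set

/-- A solution `(x, K)` (with Jordan decomposition `K = Kr - Kl`) of the Skorokhod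
problem `SP_l^r(s)` on `[0, T]` with two nonlinear time-dependent reflecting
constraints.  The flat-off conditions `∫ 1_{l(s,x_s)<0} dKl = ∫ 1_{r(s,x_s)>0} dKr = 0`
are expressed by requiring `Kl` (resp. `Kr`) to be constant on every subinterval where
the lower (resp. upper) constraint is strictly inactive. -/
structure SkorokhodSolution (T : ℝ) (l r : ℝ → ℝ → ℝ) (s : ℝ → ℝ)
    (x K Kr Kl : ℝ → ℝ) : Prop where
  cont_x : ContinuousOn x (Icc 0 T)
  eqn : ∀ t ∈ Icc (0 : ℝ) T, x t = s t + K t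
  lower : ∀ t ∈ Icc (0 : ℝ) T, l t (x t) ≤ 0
  upper : ∀ t ∈ Icc (0 : ℝ) T, 0 ≤ r t (x t)
  decomp : ∀ t ∈ Icc (0 : ℝ) T, K t = Kr t - Kl t
  Kr_zero : Kr 0 = 0
  Kl_zero : Kl 0 = 0
  cont_Kr : ContinuousOn Kr (Icc 0 T)
  cont_Kl : ContinuousOn Kl (Icc 0 T)
  mono_Kr : MonotoneOn Kr (Icc 0 T)
  mono_Kl : MonotoneOn Kl (Icc 0 T)
  flat_l : ∀ a b : ℝ, 0 ≤ a → a ≤ b → b ≤ T →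
    (∀ u ∈ Icc a b, l u (x u) < 0) → Kl b = Kl a
  flat_r : ∀ a b : ℝ, 0 ≤ a → a ≤ b → b ≤ T →
    (∀ u ∈ Icc a b, 0 < r u (x u)) → Kr b = Kr a

/-- Standing assumptions on the reflecting boundary functions `l ≤ r`:
continuity in `t`, strict monotonicity and bi-Lipschitz continuity in `x` with
constants `0 < c < C`, and uniform separation `inf (r - l) > 0`. -/
def LRAssumptions (T c C : ℝ) (l r : ℝ → ℝ → ℝ) : Prop :=
  (∀ x : ℝ, ContinuousOn (fun t => l t x) (Icc 0 T)) ∧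
  (∀ x : ℝ, ContinuousOn (fun t => r t x) (Icc 0 T)) ∧
  (∀ t ∈ Icc (0 : ℝ) T, StrictMono (l t)) ∧
  (∀ t ∈ Icc (0 : ℝ) T, StrictMono (r t)) ∧
  (∀ t ∈ Icc (0 : ℝ) T, ∀ x y : ℝ,
    c * |x - y| ≤ |l t x - l t y| ∧ |l t x - l t y| ≤ C * |x - y|) ∧
  (∀ t ∈ Icc (0 : ℝ) T, ∀ x y : ℝ,
    c * |x - y| ≤ |r t x - r t y| ∧ |r t x - r t y| ≤ C * |x - y|) ∧
  (∃ ε : ℝ, 0 < ε ∧ ∀ t ∈ Icc (0 : ℝ) T, ∀ x : ℝ, ε ≤ r t x - l t x)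


open Filter Topology

/-- joint continuity of `w ↦ r w (x w)` along a continuous path. -/
lemma skorokhod_aux_cont {T C : ℝ} {r : ℝ → ℝ → ℝ} {x : ℝ → ℝ}
    (hrt : ∀ y : ℝ, ContinuousOn (fun t => r t y) (Icc 0 T))
    (hLip : ∀ t ∈ Icc (0:ℝ) T, ∀ a b : ℝ, |r t a - r t b| ≤ C * |a - b|)
    (hx : ContinuousOn x (Icc 0 T)) {τ : ℝ} (hτ : τ ∈ Icc (0:ℝ) T) :
    ContinuousWithinAt (fun w => r w (x w)) (Icc 0 T) τ := by
  have h1 : ContinuousWithinAt (fun w => r w (x τ)) (Icc 0 T) τ := hrt (x τ) τ hτ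
  have h2 : Tendsto (fun w => r w (x w) - r w (x τ)) (𝓝[Icc (0:ℝ) T] τ) (𝓝 0) := by
    apply squeeze_zero_norm' (a := fun w => C * |x w - x τ|)
    · filter_upwards [self_mem_nhdsWithin] with w hw
      simpa using hLip w hw (x w) (x τ)
    · have h3 : Tendsto (fun w => C * |x w - x τ|) (𝓝[Icc (0:ℝ) T] τ)
          (𝓝 (C * |x τ - x τ|)) :=
        (((hx τ hτ).sub continuousWithinAt_const).abs).const_mul C
      simpa using h3
  have h1' : Tendsto (fun w => r w (x τ)) (𝓝[Icc (0:ℝ) T] τ) (𝓝 (r τ (x τ))) := h1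
  have h5 : Tendsto (fun w => r w (x w)) (𝓝[Icc (0:ℝ) T] τ) (𝓝 (r τ (x τ) + 0)) :=
    (h1'.add h2).congr (fun w => by ring)
  rw [add_zero] at h5
  exact h5

/-- descent lemma for the upper constraint. -/
lemma skorokhod_find_r {T : ℝ} {l₁ r₁ l₂ r₂ : ℝ → ℝ → ℝ}
    {s x₁ K₁ Kr₁ Kl₁ x₂ K₂ Kr₂ Kl₂ : ℝ → ℝ}
    (hsol₁ : SkorokhodSolution T l₁ r₁ s x₁ K₁ Kr₁ Kl₁)
    (hsol₂ : SkorokhodSolution T l₂ r₂ s x₂ K₂ Kr₂ Kl₂)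
    (hr : ∀ t ∈ Icc (0 : ℝ) T, ∀ y : ℝ, r₂ t y ≤ r₁ t y)
    (hmono₂ : ∀ t ∈ Icc (0 : ℝ) T, StrictMono (r₂ t))
    {τ t : ℝ} (hτ0 : 0 ≤ τ) (hτt : τ ≤ t) (htT : t ≤ T)
    (hPτ : Kr₁ τ ≤ Kr₂ τ) (hPt : Kr₂ t < Kr₁ t) :
    ∃ u ∈ Icc τ t, r₁ u (x₁ u) = 0 ∧ Kr₂ u < Kr₁ u ∧ Kl₂ u < Kl₁ u := by
  have hsub : Icc τ t ⊆ Icc (0:ℝ) T := Icc_subset_Icc hτ0 htT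
  set A : Set ℝ := {w ∈ Icc τ t | Kr₁ w ≤ Kr₂ w} with hA
  have hAne : A.Nonempty := ⟨τ, ⟨left_mem_Icc.2 hτt, hPτ⟩⟩
  have hAbdd : BddAbove A := ⟨t, fun w hw => hw.1.2⟩
  have hAclosed : IsClosed A := by
    have hcont : ContinuousOn (fun w => Kr₁ w - Kr₂ w) (Icc τ t) :=
      (hsol₁.cont_Kr.mono hsub).sub (hsol₂.cont_Kr.mono hsub)
    have hAeq : A = Icc τ t ∩ (fun w => Kr₁ w - Kr₂ w) ⁻¹' (Iic 0) := by
      ext w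
      simp [hA, sub_nonpos, and_comm]
    rw [hAeq]
    exact hcont.preimage_isClosed_of_isClosed isClosed_Icc isClosed_Iic
  set a := sSup A with ha
  have haA : a ∈ A := hAclosed.csSup_mem hAne hAbdd
  have hat : a ≤ t := haA.1.2
  have hτa : τ ≤ a := haA.1.1
  have ha_mem : a ∈ Icc (0:ℝ) T := hsub haA.1
  have hKa : Kr₁ a < Kr₁ t := by
    calc Kr₁ a ≤ Kr₂ a := haA.2
    _ ≤ Kr₂ t := hsol₂.mono_Kr ha_mem (hsub (right_mem_Icc.2 hτt)) hat
    _ < Kr₁ t := hPt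
  have hat' : a < t := by
    rcases lt_or_eq_of_le hat with h | h
    · exact h
    · exact absurd (h ▸ haA.2) (not_le.2 hPt)
  have hE : {w | Kr₁ w < Kr₁ t} ∈ 𝓝[Icc (0:ℝ) T] a :=
    (hsol₁.cont_Kr a ha_mem) (Iio_mem_nhds hKa)
  have hne : (𝓝[Ioc a t] a).NeBot := by
    rw [nhdsWithin_Ioc_eq_nhdsGT hat']
    exact nhdsGT_neBot a
  have hle : 𝓝[Ioc a t] a ≤ 𝓝[Icc (0:ℝ) T] a :=
    nhdsWithin_mono a (fun w hw => hsub ⟨le_trans hτa hw.1.le, hw.2⟩)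
  obtain ⟨a', ha'1, ha'2⟩ := Filter.nonempty_of_mem (inter_mem (hle hE) self_mem_nhdsWithin)
  have ha'0 : (0:ℝ) ≤ a' := le_trans hτ0 (le_trans hτa ha'2.1.le)
  have hu : ∃ u ∈ Icc a' t, r₁ u (x₁ u) ≤ 0 := by
    by_contra h
    push_neg at h
    have hflat := hsol₁.flat_r a' t ha'0 ha'2.2 htT h
    exact absurd hflat (ne_of_gt ha'1)
  obtain ⟨u, huab, hur⟩ := hu
  have huτt : u ∈ Icc τ t := ⟨le_trans hτa (le_trans ha'2.1.le huab.1), huab.2⟩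
  have huIcc : u ∈ Icc (0:ℝ) T := hsub huτt
  have hu0 : r₁ u (x₁ u) = 0 := le_antisymm hur (hsol₁.upper u huIcc)
  have hPu : Kr₂ u < Kr₁ u := by
    by_contra h
    push_neg at h
    have hmem : u ∈ A := ⟨huτt, h⟩
    have : u ≤ a := le_csSup hAbdd hmem
    have : a < a := lt_of_lt_of_le ha'2.1 (le_trans huab.1 this)
    exact lt_irrefl _ this
  have hx : x₁ u ≤ x₂ u := by
    have h1 : r₂ u (x₁ u) ≤ r₂ u (x₂ u) := by
      calc r₂ u (x₁ u) ≤ r₁ u (x₁ u) := hr u huIcc _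
      _ = 0 := hu0
      _ ≤ r₂ u (x₂ u) := hsol₂.upper u huIcc
    exact (hmono₂ u huIcc).le_iff_le.1 h1
  have hQu : Kl₂ u < Kl₁ u := by
    have e1 := hsol₁.eqn u huIcc
    have e2 := hsol₂.eqn u huIcc
    have d1 := hsol₁.decomp u huIcc
    have d2 := hsol₂.decomp u huIcc
    rw [e1, e2, d1, d2] at hx
    linarith
  exact ⟨u, huτt, hu0, hPu, hQu⟩

/-- descent lemma for the lower constraint. -/
lemma skorokhod_find_l {T : ℝ} {l₁ r₁ l₂ r₂ : ℝ → ℝ → ℝ}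
    {s x₁ K₁ Kr₁ Kl₁ x₂ K₂ Kr₂ Kl₂ : ℝ → ℝ}
    (hsol₁ : SkorokhodSolution T l₁ r₁ s x₁ K₁ Kr₁ Kl₁)
    (hsol₂ : SkorokhodSolution T l₂ r₂ s x₂ K₂ Kr₂ Kl₂)
    (hl : ∀ t ∈ Icc (0 : ℝ) T, ∀ y : ℝ, l₁ t y ≤ l₂ t y)
    (hmono₂ : ∀ t ∈ Icc (0 : ℝ) T, StrictMono (l₂ t))
    {τ t : ℝ} (hτ0 : 0 ≤ τ) (hτt : τ ≤ t) (htT : t ≤ T)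
    (hQτ : Kl₁ τ ≤ Kl₂ τ) (hQt : Kl₂ t < Kl₁ t) :
    ∃ u ∈ Icc τ t, l₁ u (x₁ u) = 0 ∧ Kl₂ u < Kl₁ u ∧ Kr₂ u < Kr₁ u := by
  have hsub : Icc τ t ⊆ Icc (0:ℝ) T := Icc_subset_Icc hτ0 htT
  set A : Set ℝ := {w ∈ Icc τ t | Kl₁ w ≤ Kl₂ w} with hA
  have hAne : A.Nonempty := ⟨τ, ⟨left_mem_Icc.2 hτt, hQτ⟩⟩
  have hAbdd : BddAbove A := ⟨t, fun w hw => hw.1.2⟩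
  have hAclosed : IsClosed A := by
    have hcont : ContinuousOn (fun w => Kl₁ w - Kl₂ w) (Icc τ t) :=
      (hsol₁.cont_Kl.mono hsub).sub (hsol₂.cont_Kl.mono hsub)
    have hAeq : A = Icc τ t ∩ (fun w => Kl₁ w - Kl₂ w) ⁻¹' (Iic 0) := by
      ext w
      simp [hA, sub_nonpos, and_comm]
    rw [hAeq]
    exact hcont.preimage_isClosed_of_isClosed isClosed_Icc isClosed_Iic
  set a := sSup A with ha
  have haA : a ∈ A := hAclosed.csSup_mem hAne hAbdd
  have hat : a ≤ t := haA.1.2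
  have hτa : τ ≤ a := haA.1.1
  have ha_mem : a ∈ Icc (0:ℝ) T := hsub haA.1
  have hKa : Kl₁ a < Kl₁ t := by
    calc Kl₁ a ≤ Kl₂ a := haA.2
    _ ≤ Kl₂ t := hsol₂.mono_Kl ha_mem (hsub (right_mem_Icc.2 hτt)) hat
    _ < Kl₁ t := hQt
  have hat' : a < t := by
    rcases lt_or_eq_of_le hat with h | h
    · exact h
    · exact absurd (h ▸ haA.2) (not_le.2 hQt)
  have hE : {w | Kl₁ w < Kl₁ t} ∈ 𝓝[Icc (0:ℝ) T] a :=
    (hsol₁.cont_Kl a ha_mem) (Iio_mem_nhds hKa)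
  have hne : (𝓝[Ioc a t] a).NeBot := by
    rw [nhdsWithin_Ioc_eq_nhdsGT hat']
    exact nhdsGT_neBot a
  have hle : 𝓝[Ioc a t] a ≤ 𝓝[Icc (0:ℝ) T] a :=
    nhdsWithin_mono a (fun w hw => hsub ⟨le_trans hτa hw.1.le, hw.2⟩)
  obtain ⟨a', ha'1, ha'2⟩ := Filter.nonempty_of_mem (inter_mem (hle hE) self_mem_nhdsWithin)
  have ha'0 : (0:ℝ) ≤ a' := le_trans hτ0 (le_trans hτa ha'2.1.le)
  have hu : ∃ u ∈ Icc a' t, 0 ≤ l₁ u (x₁ u) := by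
    by_contra h
    push_neg at h
    have hflat := hsol₁.flat_l a' t ha'0 ha'2.2 htT h
    exact absurd hflat (ne_of_gt ha'1)
  obtain ⟨u, huab, hur⟩ := hu
  have huτt : u ∈ Icc τ t := ⟨le_trans hτa (le_trans ha'2.1.le huab.1), huab.2⟩
  have huIcc : u ∈ Icc (0:ℝ) T := hsub huτt
  have hu0 : l₁ u (x₁ u) = 0 := le_antisymm (hsol₁.lower u huIcc) hur
  have hQu : Kl₂ u < Kl₁ u := by
    by_contra h
    push_neg at h
    have hmem : u ∈ A := ⟨huτt, h⟩
    have : u ≤ a := le_csSup hAbdd hmem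
    have : a < a := lt_of_lt_of_le ha'2.1 (le_trans huab.1 this)
    exact lt_irrefl _ this
  have hx : x₂ u ≤ x₁ u := by
    have h1 : l₂ u (x₂ u) ≤ l₂ u (x₁ u) := by
      calc l₂ u (x₂ u) ≤ 0 := hsol₂.lower u huIcc
      _ = l₁ u (x₁ u) := hu0.symm
      _ ≤ l₂ u (x₁ u) := hl u huIcc _
    exact (hmono₂ u huIcc).le_iff_le.1 h1
  have hPu : Kr₂ u < Kr₁ u := by
    have e1 := hsol₁.eqn u huIcc
    have e2 := hsol₂.eqn u huIcc
    have d1 := hsol₁.decomp u huIcc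
    have d2 := hsol₂.decomp u huIcc
    rw [e1, e2, d1, d2] at hx
    linarith
  exact ⟨u, huτt, hu0, hQu, hPu⟩

/-- Comparison property for Skorokhod problems with two nonlinear reflecting
boundaries: if `r¹ ≥ r²` and `l¹ ≤ l²` pointwise, then the wider band requires
less pushing in both directions: `K²ʳ_t ≥ K¹ʳ_t` and `K²ˡ_t ≥ K¹ˡ_t`. -/
theorem stmt_6 (T c C : ℝ) (hT : 0 ≤ T) (hc : 0 < c) (hcC : c < C)
    (l₁ r₁ l₂ r₂ : ℝ → ℝ → ℝ) (s : ℝ → ℝ) (hs : ContinuousOn s (Icc 0 T))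
    (h₁ : LRAssumptions T c C l₁ r₁) (h₂ : LRAssumptions T c C l₂ r₂)
    (hr : ∀ t ∈ Icc (0 : ℝ) T, ∀ y : ℝ, r₂ t y ≤ r₁ t y)
    (hl : ∀ t ∈ Icc (0 : ℝ) T, ∀ y : ℝ, l₁ t y ≤ l₂ t y)
    (x₁ K₁ Kr₁ Kl₁ x₂ K₂ Kr₂ Kl₂ : ℝ → ℝ)
    (hsol₁ : SkorokhodSolution T l₁ r₁ s x₁ K₁ Kr₁ Kl₁)
    (hsol₂ : SkorokhodSolution T l₂ r₂ s x₂ K₂ Kr₂ Kl₂) :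
    ∀ t ∈ Icc (0 : ℝ) T, Kr₁ t ≤ Kr₂ t ∧ Kl₁ t ≤ Kl₂ t := by
  obtain ⟨hl₁t, hr₁t, hl₁m, hr₁m, hl₁L, hr₁L, ε, hε, hsep⟩ := h₁
  obtain ⟨-, -, hl₂m, hr₂m, -, -, -⟩ := h₂
  by_contra hcon
  push_neg at hcon
  -- the set of violation times
  set S : Set ℝ := {w ∈ Icc (0:ℝ) T | Kr₂ w < Kr₁ w ∨ Kl₂ w < Kl₁ w} with hS
  have hSne : S.Nonempty := by
    obtain ⟨t₀, ht₀, hviol⟩ := hcon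
    rcases le_or_gt (Kr₁ t₀) (Kr₂ t₀) with h | h
    · exact ⟨t₀, ht₀, Or.inr (hviol h)⟩
    · exact ⟨t₀, ht₀, Or.inl h⟩
  have hSbdd : BddBelow S := ⟨0, fun w hw => hw.1.1⟩
  set τ := sInf S with hτdef
  have hτ0 : 0 ≤ τ := le_csInf hSne (fun w hw => hw.1.1)
  have hτT : τ ≤ T := by
    obtain ⟨t₀, ht₀⟩ := hSne
    exact le_trans (csInf_le hSbdd ht₀) ht₀.1.2
  have hτIcc : τ ∈ Icc (0:ℝ) T := ⟨hτ0, hτT⟩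
  -- no violation at time τ itself
  have hKr0 : ∀ Kr : ℝ → ℝ, ContinuousOn Kr (Icc 0 T) → ∀ Kr' : ℝ → ℝ,
      ContinuousOn Kr' (Icc 0 T) → Kr 0 = 0 → Kr' 0 = 0 →
      (∀ w ∈ Icc (0:ℝ) T, Kr' w < Kr w → w ∈ S) → Kr τ ≤ Kr' τ := by
    intro Kr hKr Kr' hKr' h0 h0' hmem
    by_contra hP
    push_neg at hP
    rcases eq_or_lt_of_le hτ0 with h0τ | h0τ
    · rw [← h0τ] at hP
      rw [h0, h0'] at hP
      exact lt_irrefl _ hP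
    · have hcw : ContinuousWithinAt (fun w => Kr w - Kr' w) (Icc 0 T) τ :=
        (hKr τ hτIcc).sub (hKr' τ hτIcc)
      have hE : (fun w => Kr w - Kr' w) ⁻¹' (Ioi 0) ∈ 𝓝[Icc (0:ℝ) T] τ :=
        hcw (Ioi_mem_nhds (by linarith : (0:ℝ) < Kr τ - Kr' τ))
      have hne : (𝓝[Ico (0:ℝ) τ] τ).NeBot := by
        apply mem_closure_iff_nhdsWithin_neBot.mp
        rw [closure_Ico (ne_of_lt h0τ)]
        exact right_mem_Icc.2 hτ0
      have hle2 : 𝓝[Ico (0:ℝ) τ] τ ≤ 𝓝[Icc (0:ℝ) T] τ :=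
        nhdsWithin_mono τ (fun w hw => ⟨hw.1, le_trans hw.2.le hτT⟩)
      obtain ⟨w, hw1, hw2⟩ :=
        Filter.nonempty_of_mem (inter_mem (hle2 hE) self_mem_nhdsWithin)
      have hwS : w ∈ S := hmem w ⟨hw2.1, le_trans hw2.2.le hτT⟩
        (by have := hw1; simp only [mem_preimage, mem_Ioi] at this; linarith)
      exact absurd (csInf_le hSbdd hwS) (not_le.2 hw2.2)
  have hPτ : Kr₁ τ ≤ Kr₂ τ :=
    hKr0 Kr₁ hsol₁.cont_Kr Kr₂ hsol₂.cont_Kr hsol₁.Kr_zero hsol₂.Kr_zero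
      (fun w hw hlt => ⟨hw, Or.inl hlt⟩)
  have hQτ : Kl₁ τ ≤ Kl₂ τ :=
    hKr0 Kl₁ hsol₁.cont_Kl Kl₂ hsol₂.cont_Kl hsol₁.Kl_zero hsol₂.Kl_zero
      (fun w hw hlt => ⟨hw, Or.inr hlt⟩)
  -- in any right neighbourhood of τ there are active points for both constraints
  have hfind : ∀ t ∈ S, τ ≤ t →
      (∃ u ∈ Icc τ t, r₁ u (x₁ u) = 0) ∧ (∃ v ∈ Icc τ t, l₁ v (x₁ v) = 0) := by
    intro t htS hτt
    have htT' : t ≤ T := htS.1.2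
    rcases htS.2 with hcase | hcase
    · obtain ⟨u, hu1, hu2, -, huQ⟩ :=
        skorokhod_find_r hsol₁ hsol₂ hr hr₂m hτ0 hτt htT' hPτ hcase
      obtain ⟨v, hv1, hv2, -, -⟩ :=
        skorokhod_find_l hsol₁ hsol₂ hl hl₂m hτ0 hu1.1 (le_trans hu1.2 htT') hQτ huQ
      exact ⟨⟨u, hu1, hu2⟩, ⟨v, ⟨hv1.1, le_trans hv1.2 hu1.2⟩, hv2⟩⟩
    · obtain ⟨v, hv1, hv2, -, hvP⟩ :=
        skorokhod_find_l hsol₁ hsol₂ hl hl₂m hτ0 hτt htT' hQτ hcase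
      obtain ⟨u, hu1, hu2, -, -⟩ :=
        skorokhod_find_r hsol₁ hsol₂ hr hr₂m hτ0 hv1.1 (le_trans hv1.2 htT') hPτ hvP
      exact ⟨⟨u, ⟨hu1.1, le_trans hu1.2 hv1.2⟩, hu2⟩, ⟨v, hv1, hv2⟩⟩
  -- both constraints are active at τ
  have hactive : ∀ φ : ℝ → ℝ, ContinuousWithinAt φ (Icc 0 T) τ → φ τ ≠ 0 →
      (∀ t ∈ S, τ ≤ t → ∃ u ∈ Icc τ t, φ u = 0) → False := by
    intro φ hφcw hφne hfindφ
    have hE : φ ⁻¹' ({0}ᶜ) ∈ 𝓝[Icc (0:ℝ) T] τ :=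
      hφcw (compl_singleton_mem_nhds hφne)
    rw [Metric.mem_nhdsWithin_iff] at hE
    obtain ⟨δ, hδ, hball⟩ := hE
    obtain ⟨t, htS, htlt⟩ := exists_lt_of_csInf_lt hSne (by linarith : sInf S < τ + δ)
    have hτt : τ ≤ t := csInf_le hSbdd htS
    obtain ⟨u, huI, hu0⟩ := hfindφ t htS hτt
    have humem : u ∈ Metric.ball τ δ := by
      rw [Metric.mem_ball, Real.dist_eq, abs_of_nonneg (by linarith [huI.1] : (0:ℝ) ≤ u - τ)]
      have := huI.2
      linarith
    have huIcc : u ∈ Icc (0:ℝ) T := ⟨le_trans hτ0 huI.1, le_trans huI.2 htS.1.2⟩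
    exact (hball ⟨humem, huIcc⟩) hu0
  have hrcont : ContinuousWithinAt (fun w => r₁ w (x₁ w)) (Icc 0 T) τ :=
    skorokhod_aux_cont hr₁t (fun t ht a b => (hr₁L t ht a b).2) hsol₁.cont_x hτIcc
  have hlcont : ContinuousWithinAt (fun w => l₁ w (x₁ w)) (Icc 0 T) τ :=
    skorokhod_aux_cont hl₁t (fun t ht a b => (hl₁L t ht a b).2) hsol₁.cont_x hτIcc
  have hrτ : r₁ τ (x₁ τ) = 0 := by
    by_contra hne
    exact hactive _ hrcont hne (fun t htS hτt => (hfind t htS hτt).1)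
  have hlτ : l₁ τ (x₁ τ) = 0 := by
    by_contra hne
    exact hactive _ hlcont hne (fun t htS hτt => (hfind t htS hτt).2)
  have := hsep τ hτIcc (x₁ τ)
  rw [hrτ, hlτ] at this
  linarith
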